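/- arXiv:1708.07298 — 2 statements merged into one kernel-verified Lean document; each statement's English description precedes it below -/
import Mathlib

section
/- The derivative of the Prabhakar function with respect to its argument satisfies (d/dz) E_{α,β}^γ(z) = γ E_{α,α+β}^{γ+1}(z) for all z ∈ ℂ. -/
open scoped Real
open Complex Filter

open Finset Topology

set_option maxHeartbeats 1000000

noncomputable def Complex.abs : AbsoluteValue ℂ ℝ := NormedField.toAbsoluteValue ℂ

lemma Complex.norm_eq_abs (z : ℂ) : ‖z‖ = Complex.abs z := rfl

lemma Complex.abs_apply (z : ℂ) : Complex.abs z = Real.sqrt (Complex.normSq z) := Complex.norm_def z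

lemma Complex.abs_natCast (n : ℕ) : Complex.abs (n : ℂ) = n := Complex.norm_natCast n

lemma Complex.continuous_abs : Continuous (fun z : ℂ => Complex.abs z) := continuous_norm

lemma Complex.abs_cpow_eq_rpow_re_of_pos {x : ℝ} (hx : 0 < x) (y : ℂ) :
    Complex.abs ((x : ℂ) ^ y) = x ^ y.re := Complex.norm_cpow_eq_rpow_re_of_pos hx y

lemma choose_le_two_pow' (n k : ℕ) : n.choose k ≤ 2 ^ n := by
  rcases le_or_gt k n with h | h
  · calc n.choose k ≤ ∑ m ∈ Finset.range (n+1), n.choose m :=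
        Finset.single_le_sum (fun i _ => Nat.zero_le _) (Finset.mem_range.2 (by omega))
      _ = 2 ^ n := Nat.sum_range_choose n
  · rw [Nat.choose_eq_zero_of_lt h]; exact Nat.zero_le _

lemma poch_abs_le (γ : ℂ) (k : ℕ) :
    Complex.abs ((ascPochhammer ℂ k).eval γ) ≤ ((⌈Complex.abs γ⌉₊ + 1).ascFactorial k : ℝ) := by
  induction k with
  | zero => simp
  | succ n ih =>
    rw [ascPochhammer_succ_eval, map_mul, Nat.ascFactorial_succ]
    have h1 : Complex.abs (γ + n) ≤ ((⌈Complex.abs γ⌉₊ + 1 + n : ℕ) : ℝ) := by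
      calc Complex.abs (γ + n) ≤ Complex.abs γ + Complex.abs (n : ℂ) := Complex.abs.add_le _ _
        _ = Complex.abs γ + n := by rw [Complex.abs_natCast]
        _ ≤ ((⌈Complex.abs γ⌉₊ + 1 + n : ℕ) : ℝ) := by
            push_cast
            have := Nat.le_ceil (Complex.abs γ)
            linarith
    calc Complex.abs ((ascPochhammer ℂ n).eval γ) * Complex.abs (γ + n)
        ≤ ((⌈Complex.abs γ⌉₊ + 1).ascFactorial n : ℝ) * ((⌈Complex.abs γ⌉₊ + 1 + n : ℕ) : ℝ) := by
          apply mul_le_mul ih h1 (Complex.abs.nonneg _) (by positivity)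
      _ = (((⌈Complex.abs γ⌉₊ + 1 + n) * (⌈Complex.abs γ⌉₊ + 1).ascFactorial n : ℕ) : ℝ) := by
          push_cast; ring
      _ = _ := rfl

lemma poch_div_fact_le (γ : ℂ) (k : ℕ) :
    Complex.abs ((ascPochhammer ℂ k).eval γ) ≤
      (k.factorial : ℝ) * 2 ^ (⌈Complex.abs γ⌉₊ + k) := by
  refine (poch_abs_le γ k).trans ?_
  rw [Nat.ascFactorial_eq_factorial_mul_choose]
  push_cast
  have := choose_le_two_pow' (⌈Complex.abs γ⌉₊ + k) k
  have h2 : ((⌈Complex.abs γ⌉₊ + k).choose k : ℝ) ≤ 2 ^ (⌈Complex.abs γ⌉₊ + k) := by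
    exact_mod_cast this
  have h3 : (0:ℝ) ≤ (k.factorial : ℝ) := by positivity
  calc (k.factorial : ℝ) * ((⌈Complex.abs γ⌉₊ + k).choose k : ℝ)
      ≤ (k.factorial : ℝ) * 2 ^ (⌈Complex.abs γ⌉₊ + k) := by
        exact mul_le_mul_of_nonneg_left h2 h3
  -- done

lemma sum_inv_sq_le {x : ℝ} (hx : 1 ≤ x) (n : ℕ) :
    ∑ j ∈ Finset.range (n+1), 1/(x+j)^2 ≤ 2/x := by
  have hx0 : 0 < x := lt_of_lt_of_le one_pos hx
  have key : ∀ n : ℕ, ∑ j ∈ Finset.range (n+1), 1/(x+j)^2 ≤ 1/x^2 + (1/x - 1/(x+n)) := by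
    intro n
    induction n with
    | zero => simp
    | succ m ih =>
      rw [Finset.sum_range_succ]
      have h1 : (0:ℝ) < x + m := by positivity
      have h2 : (0:ℝ) < x + (m+1) := by positivity
      have hstep : 1/(x+((m+1):ℕ))^2 ≤ 1/(x+m) - 1/(x+(m+1)) := by
        push_cast
        have heq : 1/(x+m) - 1/(x+(m+1)) = 1/((x+m)*(x+(m+1))) := by
          rw [div_sub_div _ _ (ne_of_gt h1) (by push_cast at h2 ⊢; linarith)]
          norm_num
        rw [heq]
        apply one_div_le_one_div_of_le (by positivity)
        nlinarith
      push_cast at hstep ⊢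
      push_cast at ih
      linarith
  refine (key n).trans ?_
  have h1 : 1/x^2 ≤ 1/x := by
    apply one_div_le_one_div_of_le hx0
    nlinarith
  have h2 : 0 < x + (n:ℝ) := by positivity
  have h3 : 0 < 1/(x+(n:ℝ)) := by positivity
  have : 2/x = 1/x + 1/x := by ring
  linarith

lemma abs_add_im_le {t : ℝ} (y : ℝ) (ht : 0 < t) :
    Complex.abs (t + y*Complex.I) ≤ t * Real.exp (y^2/(2*t^2)) := by
  rw [Complex.abs_apply, Complex.normSq_add_mul_I]
  have hexp : 1 + y^2/t^2 ≤ Real.exp (y^2/t^2) := by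
    have := Real.add_one_le_exp (y^2/t^2); linarith
  have h1 : t^2 + y^2 ≤ (t * Real.exp (y^2/(2*t^2)))^2 := by
    have hsq : (Real.exp (y^2/(2*t^2)))^2 = Real.exp (y^2/t^2) := by
      rw [sq, ← Real.exp_add]; congr 1; field_simp; ring
    rw [mul_pow, hsq]
    have ht2 : (0:ℝ) < t^2 := by positivity
    have : t^2 * (1 + y^2/t^2) = t^2 + y^2 := by field_simp
    nlinarith
  calc Real.sqrt (t^2+y^2) ≤ Real.sqrt ((t * Real.exp (y^2/(2*t^2)))^2) :=
        Real.sqrt_le_sqrt h1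
    _ = t * Real.exp (y^2/(2*t^2)) := Real.sqrt_sq (by positivity)

lemma abs_Gamma_lower {x : ℝ} (y : ℝ) (hx : 1 ≤ x) :
    Real.Gamma x * Real.exp (-(y^2/x)) ≤ Complex.abs (Complex.Gamma (x + y*Complex.I)) := by
  have hx0 : 0 < x := lt_of_lt_of_le one_pos hx
  set z : ℂ := (x:ℂ) + y*Complex.I with hzdef
  have hz : Tendsto (fun n => Complex.abs (Complex.GammaSeq z n)) atTop
      (𝓝 (Complex.abs (Complex.Gamma z))) :=
    (Complex.continuous_abs.tendsto _).comp (Complex.GammaSeq_tendsto_Gamma z)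
  have hr : Tendsto (fun n => Real.GammaSeq x n * Real.exp (-(y^2/x))) atTop
      (𝓝 (Real.Gamma x * Real.exp (-(y^2/x)))) :=
    (Real.GammaSeq_tendsto_Gamma x).mul_const _
  refine le_of_tendsto_of_tendsto hr hz ?_
  filter_upwards [eventually_ge_atTop 1] with n hn
  -- notation
  set P : ℝ := ∏ j ∈ Finset.range (n+1), (x + j) with hPdef
  set B : ℝ := ∏ j ∈ Finset.range (n+1), Complex.abs (z + j) with hBdef
  have hP : 0 < P := Finset.prod_pos (fun j _ => by positivity)
  have hzj : ∀ j : ℕ, z + j = ((x + j : ℝ):ℂ) + (y:ℂ)*Complex.I := by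
    intro j; rw [hzdef]; push_cast; ring
  have hB0 : 0 < B := by
    apply Finset.prod_pos
    intro j _
    rw [hzj j]
    apply AbsoluteValue.pos
    intro h
    have h2 := congrArg Complex.re h
    simp at h2
    have h3 : (0:ℝ) < x + j := by positivity
    linarith
  have habs : Complex.abs (Complex.GammaSeq z n) = (n:ℝ)^x * n.factorial / B := by
    rw [Complex.GammaSeq, map_div₀, map_mul, map_prod, Complex.abs_natCast]
    congr 2
    have hn0 : (0:ℝ) < (n:ℝ) := by exact_mod_cast hn
    have : ((n:ℂ)) = (((n:ℝ)):ℂ) := by push_cast; rfl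
    rw [this, Complex.abs_cpow_eq_rpow_re_of_pos hn0]
    congr 1
    rw [hzdef]; simp
  have hB : B ≤ P * Real.exp (y^2/x) := by
    have hstep : B ≤ ∏ j ∈ Finset.range (n+1), ((x+j) * Real.exp (y^2/(2*(x+j)^2))) := by
      apply Finset.prod_le_prod (fun j _ => AbsoluteValue.nonneg _ _)
      intro j _
      rw [hzj j]
      exact abs_add_im_le y (by positivity)
    refine hstep.trans ?_
    rw [Finset.prod_mul_distrib, ← Real.exp_sum]
    apply mul_le_mul_of_nonneg_left _ hP.le
    apply Real.exp_le_exp.2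
    have : ∑ j ∈ Finset.range (n+1), y^2/(2*(x+j)^2)
        = (y^2/2) * ∑ j ∈ Finset.range (n+1), 1/(x+j)^2 := by
      rw [Finset.mul_sum]; exact Finset.sum_congr rfl fun j _ => by rw [div_mul_div_comm, mul_one]
    rw [this]
    calc (y^2/2) * ∑ j ∈ Finset.range (n+1), 1/(x+j)^2
        ≤ (y^2/2) * (2/x) := by
          apply mul_le_mul_of_nonneg_left (sum_inv_sq_le hx n) (by positivity)
      _ = y^2/x := by field_simp
  -- now conclude
  have hGS : Real.GammaSeq x n = (n:ℝ)^x * n.factorial / P := by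
    rw [Real.GammaSeq]
  rw [hGS, habs]
  rw [div_mul_eq_mul_div, div_le_div_iff₀ hP hB0]
  have hA : (0:ℝ) ≤ (n:ℝ)^x * n.factorial := by positivity
  have hEB : Real.exp (-(y^2/x)) * B ≤ P := by
    rw [Real.exp_neg]
    rw [inv_mul_le_iff₀ (Real.exp_pos _)]
    calc B ≤ P * Real.exp (y^2/x) := hB
      _ = Real.exp (y^2/x) * P := by ring
  calc (n:ℝ)^x * n.factorial * Real.exp (-(y^2/x)) * B
      = ((n:ℝ)^x * n.factorial) * (Real.exp (-(y^2/x)) * B) := by ring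
    _ ≤ ((n:ℝ)^x * n.factorial) * P := mul_le_mul_of_nonneg_left hEB hA
    _ = (n:ℝ)^x * n.factorial * P := by ring

lemma Gamma_ge_factorial {x : ℝ} (hx : 2 ≤ x) :
    ((⌊x⌋₊ - 1).factorial : ℝ) ≤ Real.Gamma x := by
  have h2 : 2 ≤ ⌊x⌋₊ := Nat.le_floor (by exact_mod_cast hx)
  have hfl : (⌊x⌋₊ : ℝ) ≤ x := Nat.floor_le (by linarith)
  have hmono := Real.Gamma_strictMonoOn_Ici.monotoneOn
  have key : Real.Gamma (⌊x⌋₊ : ℝ) ≤ Real.Gamma x := by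
    apply hmono _ _ hfl
    · simp only [Set.mem_Ici]; exact_mod_cast h2
    · simp only [Set.mem_Ici]; exact hx
  refine le_trans ?_ key
  have h4 : ⌊x⌋₊ - 1 + 1 = ⌊x⌋₊ := by omega
  have h5 : ((⌊x⌋₊ - 1 : ℕ) : ℝ) + 1 = (⌊x⌋₊ : ℝ) := by exact_mod_cast congrArg (Nat.cast : ℕ → ℝ) h4
  rw [← h5, Real.Gamma_nat_eq_factorial]

lemma prabhakar_coeff_bound (α β γ : ℂ) (hα : 0 < α.re) (R : ℝ) (hR : 0 ≤ R) :
    ∃ M : ℝ, ∀ᶠ k in atTop,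
      Complex.abs ((ascPochhammer ℂ k).eval γ) /
        ((k.factorial : ℝ) * Complex.abs (Complex.Gamma (α * k + β))) * R ^ k ≤ M := by
  set a : ℝ := α.re with ha
  set b : ℝ := β.re with hb
  set d : ℝ := |α.im| + |β.im| + 1 with hd
  set N : ℕ := ⌈Complex.abs γ⌉₊ with hN
  set E : ℝ := Real.exp (2*d^2/a) with hE
  set S : ℝ := (2*R+2)*E with hS
  set T : ℝ := S ^ ((2:ℝ)/a) with hT
  have hd0 : 0 < d := by positivity
  have hE1 : 1 ≤ E := by
    rw [hE]; have : (0:ℝ) ≤ 2*d^2/a := by positivity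
    calc (1:ℝ) = Real.exp 0 := (Real.exp_zero).symm
      _ ≤ E := Real.exp_le_exp.2 this
  have hS1 : 1 ≤ S := by
    rw [hS]; nlinarith
  have hS0 : 0 ≤ S := by linarith
  have hT1 : 1 ≤ T := by
    rw [hT]
    calc (1:ℝ) = S ^ (0:ℝ) := (Real.rpow_zero S).symm
      _ ≤ S ^ ((2:ℝ)/a) := Real.rpow_le_rpow_of_exponent_le hS1 (by positivity)
  have hT0 : 0 ≤ T := by linarith
  have hsumT : Summable (fun m : ℕ => T^m / (m.factorial : ℝ)) :=
    Real.summable_pow_div_factorial T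
  refine ⟨2^N * ∑' m : ℕ, T^m / (m.factorial : ℝ), ?_⟩
  have hcast : Tendsto (fun k : ℕ => (k:ℝ)) atTop atTop := tendsto_natCast_atTop_atTop
  filter_upwards [eventually_ge_atTop 1, hcast.eventually_ge_atTop ((2*|b|+4)/a)]
    with k hk1 hk2
  -- real and imaginary parts
  set x : ℝ := (α * k + β).re with hx
  set y : ℝ := (α * k + β).im with hy
  have hxval : x = a * k + b := by
    rw [hx]; simp [Complex.add_re, Complex.mul_re]; rfl
  have hyval : y = α.im * k + β.im := by
    rw [hy]; simp [Complex.add_im, Complex.mul_im]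
  have hak : 2*|b| + 4 ≤ a * k := by
    rw [div_le_iff₀ hα] at hk2; linarith [hk2]
  have habs_b : -|b| ≤ b := neg_abs_le b
  have hx2 : a * k / 2 + 2 ≤ x := by rw [hxval]; linarith
  have hak0 : (0:ℝ) < a * k / 2 := by
    have : (1:ℝ) ≤ (k:ℝ) := by exact_mod_cast hk1
    positivity
  have hx1 : (1:ℝ) ≤ x := by linarith
  have hx2' : (2:ℝ) ≤ x := by linarith
  have hxpos : (0:ℝ) < x := by linarith
  -- gamma lower bound
  set m : ℕ := ⌊x⌋₊ - 1 with hm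
  have hfl2 : 2 ≤ ⌊x⌋₊ := Nat.le_floor (by exact_mod_cast hx2')
  have hmcast : (m:ℝ) = (⌊x⌋₊:ℝ) - 1 := by
    rw [hm]; rw [Nat.cast_sub (by omega)]; simp
  have hmge : a * k / 2 ≤ (m:ℝ) := by
    have hfl : x - 1 < (⌊x⌋₊:ℝ) := Nat.sub_one_lt_floor x
    rw [hmcast]; linarith
  have hgamma : ((m.factorial : ℝ)) * Real.exp (-(y^2/x)) ≤
      Complex.abs (Complex.Gamma (α * k + β)) := by
    have h1 := abs_Gamma_lower y hx1
    have h2 := Gamma_ge_factorial hx2'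
    have h3 : ((x:ℂ) + (y:ℂ)*Complex.I) = α * k + β := by
      rw [hx, hy]; exact Complex.re_add_im _
    rw [h3] at h1
    have h4 : (0:ℝ) < Real.exp (-(y^2/x)) := Real.exp_pos _
    calc ((m.factorial : ℝ)) * Real.exp (-(y^2/x))
        ≤ Real.Gamma x * Real.exp (-(y^2/x)) := by
          apply mul_le_mul_of_nonneg_right h2 h4.le
      _ ≤ _ := h1
  -- exponential bound
  have hy2 : y^2 ≤ (d*k)^2 := by
    have h1 : |y| ≤ d * k := by
      rw [hyval]
      have hk1' : (1:ℝ) ≤ (k:ℝ) := by exact_mod_cast hk1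
      calc |α.im * k + β.im| ≤ |α.im * k| + |β.im| := abs_add_le _ _
        _ = |α.im| * k + |β.im| := by rw [abs_mul, Nat.abs_cast]
        _ ≤ d * k := by rw [hd]; nlinarith [abs_nonneg α.im, abs_nonneg β.im]
    calc y^2 = |y|^2 := (_root_.sq_abs y).symm
      _ ≤ (d*k)^2 := pow_le_pow_left₀ (abs_nonneg y) h1 2
  have hexp : Real.exp (y^2/x) ≤ E^k := by
    have h1 : y^2/x ≤ (2*d^2/a) * k := by
      have h2 : y^2/x ≤ (d*k)^2/(a*k/2) := by
        apply div_le_div₀ (by positivity) hy2 hak0 (by linarith)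
      refine h2.trans (le_of_eq ?_)
      have hk0 : (0:ℝ) < (k:ℝ) := by exact_mod_cast hk1
      field_simp
    calc Real.exp (y^2/x) ≤ Real.exp ((2*d^2/a) * k) := Real.exp_le_exp.2 h1
      _ = E^k := by rw [hE, mul_comm (2*d^2/a) (k:ℝ), Real.exp_nat_mul]
  -- main chain
  have hfac0 : (0:ℝ) < (k.factorial : ℝ) := by positivity
  have hm0 : (0:ℝ) < (m.factorial : ℝ) := by positivity
  have hEneg : (0:ℝ) < Real.exp (-(y^2/x)) := Real.exp_pos _
  have hden : (0:ℝ) < (m.factorial : ℝ) * Real.exp (-(y^2/x)) := by positivity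
  have step1 : Complex.abs ((ascPochhammer ℂ k).eval γ) /
        ((k.factorial : ℝ) * Complex.abs (Complex.Gamma (α * k + β))) * R ^ k ≤
      ((k.factorial : ℝ) * 2 ^ (N+k) * R^k) /
        ((k.factorial : ℝ) * ((m.factorial : ℝ) * Real.exp (-(y^2/x)))) := by
    rw [div_mul_eq_mul_div]
    apply div_le_div₀ (by positivity)
    · exact mul_le_mul_of_nonneg_right (poch_div_fact_le γ k) (by positivity)
    · positivity
    · exact mul_le_mul_of_nonneg_left hgamma hfac0.le
  have step2 : ((k.factorial : ℝ) * 2 ^ (N+k) * R^k) /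
        ((k.factorial : ℝ) * ((m.factorial : ℝ) * Real.exp (-(y^2/x)))) =
      2^N * ((2*R)^k * Real.exp (y^2/x)) / (m.factorial : ℝ) := by
    rw [mul_assoc, mul_div_mul_left _ _ (ne_of_gt hfac0), Real.exp_neg, pow_add, mul_pow]
    field_simp
  have hSk : (2*R)^k * Real.exp (y^2/x) ≤ S^k := by
    calc (2*R)^k * Real.exp (y^2/x) ≤ (2*R)^k * E^k := by
          apply mul_le_mul_of_nonneg_left hexp (by positivity)
      _ = ((2*R)*E)^k := (mul_pow _ _ _).symm
      _ ≤ S^k := pow_le_pow_left₀ (by positivity) (by rw [hS]; nlinarith) k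
  have hTm : S^k ≤ T^m := by
    have h1 : (S:ℝ)^(k:ℕ) = S ^ ((k:ℝ)) := (Real.rpow_natCast S k).symm
    have h2 : S ^ ((k:ℝ)) = T ^ ((a*k/2 : ℝ)) := by
      rw [hT, ← Real.rpow_mul (by linarith : (0:ℝ) ≤ S)]
      congr 1
      field_simp
    have h3 : T ^ ((a*k/2 : ℝ)) ≤ T ^ ((m:ℝ)) :=
      Real.rpow_le_rpow_of_exponent_le hT1 hmge
    have h4 : T ^ ((m:ℝ)) = T^(m:ℕ) := Real.rpow_natCast T m
    calc (S:ℝ)^(k:ℕ) = T ^ ((a*k/2 : ℝ)) := by rw [← h2, Real.rpow_natCast]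
      _ ≤ T ^ ((m:ℝ)) := h3
      _ = T^(m:ℕ) := h4
  have hle_tsum : T^m / (m.factorial : ℝ) ≤ ∑' n : ℕ, T^n / (n.factorial : ℝ) := by
    apply Summable.le_tsum hsumT m
    intro j _
    have : (0:ℝ) ≤ T^j := pow_nonneg hT0 j
    positivity
  calc Complex.abs ((ascPochhammer ℂ k).eval γ) /
        ((k.factorial : ℝ) * Complex.abs (Complex.Gamma (α * k + β))) * R ^ k
      ≤ ((k.factorial : ℝ) * 2 ^ (N+k) * R^k) /
        ((k.factorial : ℝ) * ((m.factorial : ℝ) * Real.exp (-(y^2/x)))) := step1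
    _ = 2^N * ((2*R)^k * Real.exp (y^2/x)) / (m.factorial : ℝ) := step2
    _ ≤ 2^N * (T^m) / (m.factorial : ℝ) := by
        gcongr
        exact hSk.trans hTm
    _ = 2^N * (T^m / (m.factorial : ℝ)) := by ring
    _ ≤ 2^N * ∑' n : ℕ, T^n / (n.factorial : ℝ) := by
        apply mul_le_mul_of_nonneg_left hle_tsum (by positivity)

/-- The Prabhakar (three-parameter Mittag-Leffler) function, defined by its
entire power series, with reciprocal Gamma understood as `0` at poles. -/
noncomputable def prabhakar (α β γ z : ℂ) : ℂ :=
  ∑' k : ℕ, (ascPochhammer ℂ k).eval γ * z ^ k / ((Nat.factorial k : ℂ) * Complex.Gamma (α * k + β))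

lemma prabhakar_summable (α β γ : ℂ) (hα : 0 < α.re) (r : ℝ) (hr : 0 ≤ r) :
    Summable (fun k : ℕ => Complex.abs ((ascPochhammer ℂ k).eval γ) /
        ((k.factorial:ℝ) * Complex.abs (Complex.Gamma (α * k + β))) * r ^ k) := by
  obtain ⟨M, hM⟩ := prabhakar_coeff_bound α β γ hα (2*r+2) (by linarith)
  apply summable_of_isBigO_nat (summable_geometric_of_lt_one (by norm_num : (0:ℝ) ≤ 1/2)
    (by norm_num : (1/2:ℝ) < 1))
  rw [Asymptotics.isBigO_iff]
  refine ⟨M, ?_⟩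
  filter_upwards [hM] with k hk
  have hck : (0:ℝ) ≤ Complex.abs ((ascPochhammer ℂ k).eval γ) /
      ((k.factorial:ℝ) * Complex.abs (Complex.Gamma (α * k + β))) := by positivity
  have h1 : r ^ k ≤ (2*r+2)^k * (1/2)^k := by
    rw [← mul_pow]
    apply pow_le_pow_left₀ hr
    linarith
  have h2 : Complex.abs ((ascPochhammer ℂ k).eval γ) /
        ((k.factorial:ℝ) * Complex.abs (Complex.Gamma (α * k + β))) * r ^ k ≤ M * (1/2)^k := by
    calc Complex.abs ((ascPochhammer ℂ k).eval γ) /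
          ((k.factorial:ℝ) * Complex.abs (Complex.Gamma (α * k + β))) * r ^ k
        ≤ Complex.abs ((ascPochhammer ℂ k).eval γ) /
          ((k.factorial:ℝ) * Complex.abs (Complex.Gamma (α * k + β))) * ((2*r+2)^k * (1/2)^k) :=
          mul_le_mul_of_nonneg_left h1 hck
      _ = (Complex.abs ((ascPochhammer ℂ k).eval γ) /
          ((k.factorial:ℝ) * Complex.abs (Complex.Gamma (α * k + β))) * (2*r+2)^k) * (1/2)^k := by
          ring
      _ ≤ M * (1/2)^k := by
          apply mul_le_mul_of_nonneg_right hk (by positivity)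
  have e1 : ‖Complex.abs ((ascPochhammer ℂ k).eval γ) /
      ((k.factorial:ℝ) * Complex.abs (Complex.Gamma (α * k + β))) * r ^ k‖
      = Complex.abs ((ascPochhammer ℂ k).eval γ) /
      ((k.factorial:ℝ) * Complex.abs (Complex.Gamma (α * k + β))) * r ^ k :=
    Real.norm_of_nonneg (by positivity)
  have e2 : ‖((1:ℝ)/2) ^ k‖ = ((1:ℝ)/2)^k := Real.norm_of_nonneg (by positivity)
  rw [e1, e2]
  exact h2

lemma coeff_id (α β γ z : ℂ) (n : ℕ) :
    (ascPochhammer ℂ (n+1)).eval γ / ((Nat.factorial (n+1) : ℂ) * Complex.Gamma (α*((n+1:ℕ):ℂ)+β))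
      * (((n+1:ℕ):ℂ) * z^n)
    = γ * ((ascPochhammer ℂ n).eval (γ+1) * z^n /
        ((Nat.factorial n : ℂ) * Complex.Gamma (α*n+(α+β)))) := by
  have hpoch : (ascPochhammer ℂ (n+1)).eval γ = γ * (ascPochhammer ℂ n).eval (γ+1) := by
    rw [ascPochhammer_succ_left, Polynomial.eval_mul, Polynomial.eval_X, Polynomial.eval_comp,
      Polynomial.eval_add, Polynomial.eval_X, Polynomial.eval_one]
  have hGam : Complex.Gamma (α*((n+1:ℕ):ℂ)+β) = Complex.Gamma (α*n+(α+β)) := by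
    congr 1; push_cast; ring
  have hfact : ((Nat.factorial (n+1) : ℕ):ℂ) = ((n+1:ℕ):ℂ) * (Nat.factorial n : ℂ) := by
    push_cast [Nat.factorial_succ]; ring
  have hu0 : (((n+1:ℕ):ℂ)) ≠ 0 := Nat.cast_ne_zero.2 (Nat.succ_ne_zero n)
  have key : ∀ (A B u v : ℂ), u ≠ 0 → A/(u*B) * (u*v) = A*v/B := by
    intro A B u v hu
    rw [div_mul_eq_mul_div]
    have h : A*(u*v) = u*(A*v) := by ring
    rw [h, mul_div_mul_left _ _ hu]
  rw [hpoch, hGam, hfact, mul_assoc, key _ _ _ _ hu0, mul_assoc, mul_div_assoc]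

theorem prabhakar_deriv (α β γ : ℂ) (hα : 0 < α.re) (z : ℂ) :
    deriv (prabhakar α β γ) z = γ * prabhakar α (α + β) (γ + 1) z := by
  set c : ℕ → ℂ := fun k =>
    (ascPochhammer ℂ k).eval γ / ((Nat.factorial k : ℂ) * Complex.Gamma (α*k+β)) with hc
  have hkey : ∀ k : ℕ, ‖c k‖ = Complex.abs ((ascPochhammer ℂ k).eval γ) /
      ((k.factorial:ℝ) * Complex.abs (Complex.Gamma (α * k + β))) := by
    intro k
    rw [hc]
    simp only [Complex.norm_eq_abs, map_div₀, map_mul, Complex.abs_natCast]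
  have hsum : ∀ r : ℝ, 0 ≤ r → Summable (fun k : ℕ => ‖c k‖ * r^k) := by
    intro r hr
    simp only [hkey]
    exact prabhakar_summable α β γ hα r hr
  set ρ : ℝ := Complex.abs z + 1 with hρ
  have hρ1 : (1:ℝ) ≤ ρ := by
    have := Complex.abs.nonneg z; rw [hρ]; linarith
  have hρ0 : (0:ℝ) < ρ := by linarith
  set u : ℕ → ℝ := fun n => ‖c n‖ * (2*ρ)^n with hudef
  have hu : Summable u := hsum (2*ρ) (by linarith)
  have hg' : ∀ (n : ℕ) (w : ℂ), w ∈ Metric.ball (0:ℂ) ρ →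
      ‖c n * ((n:ℂ) * w^(n-1))‖ ≤ u n := by
    intro n w hw
    have hwρ : Complex.abs w ≤ ρ := by
      rw [Metric.mem_ball, dist_zero_right] at hw
      exact le_of_lt hw
    rw [norm_mul, norm_mul, norm_pow]
    have h1 : ‖(n:ℂ)‖ = (n:ℝ) := by
      rw [Complex.norm_natCast]
    rw [h1]
    have h2 : ‖w‖^(n-1) ≤ ρ^(n-1) := by
      apply pow_le_pow_left₀ (norm_nonneg w) hwρ
    have h3 : (ρ:ℝ)^(n-1) ≤ ρ^n := pow_le_pow_right₀ hρ1 (Nat.sub_le n 1)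
    have h4 : (n:ℝ) ≤ 2^n := by
      exact_mod_cast (Nat.lt_two_pow_self (n := n)).le
    have h5 : (n:ℝ) * ‖w‖^(n-1) ≤ 2^n * ρ^n := by
      apply mul_le_mul h4 (h2.trans h3) (by positivity) (by positivity)
    calc ‖c n‖ * ((n:ℝ) * ‖w‖^(n-1)) ≤ ‖c n‖ * (2^n * ρ^n) :=
          mul_le_mul_of_nonneg_left h5 (norm_nonneg _)
      _ = ‖c n‖ * (2*ρ)^n := by rw [mul_pow]
  have hg : ∀ (n : ℕ) (w : ℂ), w ∈ Metric.ball (0:ℂ) ρ →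
      HasDerivAt (fun y => c n * y^n) (c n * ((n:ℂ) * w^(n-1))) w := by
    intro n w _
    exact (hasDerivAt_pow n w).const_mul (c n)
  have hg0 : Summable (fun n => c n * (0:ℂ)^n) := by
    apply Summable.of_norm_bounded (hsum ρ (by linarith))
    intro n
    rw [norm_mul, norm_pow, norm_zero]
    apply mul_le_mul_of_nonneg_left _ (norm_nonneg _)
    rcases Nat.eq_zero_or_pos n with h | h
    · subst h; simp
    · rw [zero_pow (by omega : n ≠ 0)]
      positivity
  have hzball : z ∈ Metric.ball (0:ℂ) ρ := by
    rw [Metric.mem_ball, dist_zero_right]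
    rw [hρ, Complex.norm_eq_abs]; linarith
  have h0ball : (0:ℂ) ∈ Metric.ball (0:ℂ) ρ := Metric.mem_ball_self hρ0
  have hderiv := hasDerivAt_tsum_of_isPreconnected hu Metric.isOpen_ball
    (convex_ball (0:ℂ) ρ).isPreconnected hg hg' h0ball hg0 hzball
  have hfun : (fun w : ℂ => ∑' n : ℕ, c n * w^n) = prabhakar α β γ := by
    funext w
    unfold prabhakar
    exact tsum_congr fun k => div_mul_eq_mul_div _ _ _
  rw [← hfun]
  rw [hderiv.deriv]
  -- compute the sum
  have hsumm' : Summable (fun n => c n * ((n:ℂ) * z^(n-1))) :=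
    Summable.of_norm_bounded hu (fun n => hg' n z hzball)
  rw [Summable.tsum_eq_zero_add hsumm']
  simp only [Nat.cast_zero, zero_mul, mul_zero, zero_add, Nat.succ_sub_one]
  have hterm : ∀ n : ℕ, c (n+1) * (((n+1:ℕ):ℂ) * z^n)
      = γ * ((ascPochhammer ℂ n).eval (γ+1) * z^n /
          ((Nat.factorial n : ℂ) * Complex.Gamma (α*n+(α+β)))) := by
    intro n
    rw [hc]
    exact coeff_id α β γ z n
  calc ∑' n : ℕ, c (n+1) * (((n+1:ℕ):ℂ) * z^n)
      = ∑' n : ℕ, γ * ((ascPochhammer ℂ n).eval (γ+1) * z^n /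
          ((Nat.factorial n : ℂ) * Complex.Gamma (α*n+(α+β)))) := tsum_congr hterm
    _ = γ * prabhakar α (α + β) (γ + 1) z := by
        rw [tsum_mul_left]
        rfl
end

section
/- Semigroup-type convolution property: for real α > 0, β₁, β₂ > 0, γ₁, γ₂ ∈ ℂ, λ ∈ ℂ, and t > 0, ∫_0^t (t−u)^{β₁−1} E_{α,β₁}^{γ₁}(λ(t−u)^α) u^{β₂−1} E_{α,β₂}^{γ₂}(λ u^α) du = t^{β₁+β₂−1} E_{α,β₁+β₂}^{γ₁+γ₂}(λ t^α). -/
open scoped Real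
open Complex Filter

open MeasureTheory

private lemma gamma_add_lb {x m α : ℝ} (hx : 2 ≤ x) (hm0 : 0 < m) (hm1 : m ≤ 1) (hmα : m ≤ α) :
    Real.Gamma x * (x ^ m / 2) ≤ Real.Gamma (x + α) := by
  have hx0 : (0:ℝ) < x := lt_of_lt_of_le two_pos hx
  have hxm0 : (0:ℝ) < x + m := by linarith
  have hconv := Real.convexOn_log_Gamma.2 (Set.mem_Ioi.mpr hxm0)
      (Set.mem_Ioi.mpr (by linarith : (0:ℝ) < x + 1 + m)) hm0.le
      (by linarith : (0:ℝ) ≤ 1 - m) (by ring)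
  have hcomb : m • (x + m) + (1 - m) • (x + 1 + m) = x + 1 := by
    simp only [smul_eq_mul]; ring
  rw [hcomb] at hconv
  simp only [Function.comp_apply, smul_eq_mul] at hconv
  have hΓxm : 0 < Real.Gamma (x + m) := Real.Gamma_pos_of_pos hxm0
  have hΓ1 : Real.Gamma (x + 1 + m) = (x + m) * Real.Gamma (x + m) := by
    rw [show x + 1 + m = (x + m) + 1 by ring, Real.Gamma_add_one hxm0.ne']
  rw [hΓ1, Real.log_mul hxm0.ne' hΓxm.ne'] at hconv
  have hconv' : Real.log (Real.Gamma (x + 1)) ≤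
      Real.log (Real.Gamma (x + m) * (x + m) ^ (1 - m)) := by
    rw [Real.log_mul hΓxm.ne' (Real.rpow_pos_of_pos hxm0 _).ne', Real.log_rpow hxm0]
    nlinarith [hconv]
  have key : x * Real.Gamma x ≤ Real.Gamma (x + m) * (x + m) ^ (1 - m) := by
    rw [← Real.Gamma_add_one hx0.ne']
    exact (Real.log_le_log_iff (Real.Gamma_pos_of_pos (by linarith))
      (by positivity)).mp hconv'
  have bound : (x + m) ^ (1 - m) ≤ 2 * x ^ (1 - m) := by
    calc (x + m) ^ (1 - m) ≤ (2 * x) ^ (1 - m) :=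
          Real.rpow_le_rpow hxm0.le (by linarith) (by linarith)
      _ = 2 ^ (1 - m) * x ^ (1 - m) := Real.mul_rpow (by norm_num) hx0.le
      _ ≤ 2 * x ^ (1 - m) := by
          have h2 : (2:ℝ) ^ (1 - m) ≤ 2 ^ (1:ℝ) :=
            Real.rpow_le_rpow_of_exponent_le one_le_two (by linarith)
          rw [Real.rpow_one] at h2
          exact mul_le_mul_of_nonneg_right h2 (Real.rpow_nonneg hx0.le _)
  have mono : Real.Gamma (x + m) ≤ Real.Gamma (x + α) :=
    Real.Gamma_strictMonoOn_Ici.monotoneOn (by simp only [Set.mem_Ici]; linarith)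
      (by simp only [Set.mem_Ici]; linarith) (by linarith)
  have hxmm : x ^ m * x ^ (1 - m) = x := by
    rw [← Real.rpow_add hx0]; simp
  have h3 : (Real.Gamma x * (x ^ m / 2)) * (2 * x ^ (1 - m)) = x * Real.Gamma x := by
    linear_combination Real.Gamma x * hxmm
  have h4 : (Real.Gamma x * (x ^ m / 2)) * (2 * x ^ (1 - m)) ≤
      Real.Gamma (x + m) * (2 * x ^ (1 - m)) := by
    rw [h3]
    calc x * Real.Gamma x ≤ Real.Gamma (x + m) * (x + m) ^ (1 - m) := key
      _ ≤ Real.Gamma (x + m) * (2 * x ^ (1 - m)) :=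
          mul_le_mul_of_nonneg_left bound hΓxm.le
  exact (le_of_mul_le_mul_right h4 (by positivity)).trans mono

private lemma pochhammer_vandermonde (a b : ℂ) (n : ℕ) :
    (ascPochhammer ℂ n).eval (a + b) =
      ∑ p ∈ Finset.HasAntidiagonal.antidiagonal n,
        (n.choose p.1 : ℂ) * ((ascPochhammer ℂ p.1).eval a * (ascPochhammer ℂ p.2).eval b) := by
  induction n with
  | zero => simp
  | succ n ih =>
    set T : ℕ × ℕ → ℂ := fun p =>
      (n.choose p.1 : ℂ) * ((ascPochhammer ℂ p.1).eval a * (ascPochhammer ℂ p.2).eval b) with hT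
    set U : ℕ × ℕ → ℂ := fun p =>
      (n.choose p.1 : ℂ) * ((ascPochhammer ℂ (p.1+1)).eval a * (ascPochhammer ℂ p.2).eval b)
      with hU
    have eqT : (ascPochhammer ℂ (n+1)).eval b
          + ∑ p ∈ Finset.HasAntidiagonal.antidiagonal n, T (p.1 + 1, p.2)
        = ∑ p ∈ Finset.HasAntidiagonal.antidiagonal n, T (p.1, p.2 + 1) := by
      have e1 := Finset.Nat.sum_antidiagonal_succ (n := n) (f := T)
      have e2 := Finset.Nat.sum_antidiagonal_succ' (n := n) (f := T)
      rw [e2] at e1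
      simpa [hT, Nat.choose_succ_self] using e1.symm
    rw [ascPochhammer_succ_eval, ih]
    calc (∑ p ∈ Finset.HasAntidiagonal.antidiagonal n, T p) * (a + b + n)
        = ∑ p ∈ Finset.HasAntidiagonal.antidiagonal n, (U p + T (p.1, p.2 + 1)) := by
          rw [Finset.sum_mul]
          apply Finset.sum_congr rfl
          intro p hp
          have hpn : p.1 + p.2 = n := Finset.HasAntidiagonal.mem_antidiagonal.mp hp
          simp only [hT, hU, ascPochhammer_succ_eval]
          have : a + b + (n:ℂ) = (a + p.1) + (b + p.2) := by
            rw [← hpn]; push_cast; ring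
          rw [this]; ring
      _ = ∑ p ∈ Finset.HasAntidiagonal.antidiagonal (n+1),
            ((n+1).choose p.1 : ℂ) *
              ((ascPochhammer ℂ p.1).eval a * (ascPochhammer ℂ p.2).eval b) := by
          rw [Finset.Nat.sum_antidiagonal_succ]
          rw [Finset.sum_add_distrib, ← eqT]
          have step : ∀ p ∈ Finset.HasAntidiagonal.antidiagonal n,
              (((n+1).choose (p.1+1) : ℕ) : ℂ) *
                ((ascPochhammer ℂ (p.1+1)).eval a * (ascPochhammer ℂ p.2).eval b)
              = U p + T (p.1+1, p.2) := by
            intro p _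
            rw [Nat.choose_succ_succ]
            simp only [hT, hU]
            push_cast
            ring
          rw [Finset.sum_congr rfl step, Finset.sum_add_distrib]
          simp only [Nat.choose_zero_right, Nat.cast_one, ascPochhammer_zero,
            Polynomial.eval_one, one_mul]
          ring

private lemma summable_master {α β : ℝ} (hα : 0 < α) (hβ : 0 < β) (γ : ℂ) {r : ℝ} (hr : 0 ≤ r) :
    Summable (fun k : ℕ =>
      ‖(ascPochhammer ℂ k).eval γ‖ * r ^ k / (k.factorial * Real.Gamma (α * k + β))) := by
  set m := min α 1 with hm
  have hm0 : 0 < m := lt_min hα one_pos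
  have hm1 : m ≤ 1 := min_le_right _ _
  have hmα : m ≤ α := min_le_left _ _
  set C : ℝ := (8 * r + 1) ^ (1 / m) with hC
  have htend : Tendsto (fun k : ℕ => α * k + β) atTop atTop := by
    apply tendsto_atTop_add_const_right
    exact (tendsto_natCast_atTop_atTop (R := ℝ)).const_mul_atTop hα
  apply summable_of_ratio_norm_eventually_le (r := 1/2) (by norm_num)
  filter_upwards [htend.eventually_ge_atTop 2, htend.eventually_ge_atTop C,
    (tendsto_natCast_atTop_atTop (R := ℝ)).eventually_ge_atTop ‖γ‖] with k hk2 hkC hkγ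
  set x := α * k + β with hx
  have hx0 : (0:ℝ) < x := lt_of_lt_of_le two_pos hk2
  have hΓx : 0 < Real.Gamma x := Real.Gamma_pos_of_pos hx0
  have hΓxa : 0 < Real.Gamma (x + α) := Real.Gamma_pos_of_pos (by linarith)
  have hxm : 8 * r + 1 ≤ x ^ m := by
    calc 8 * r + 1 = ((8 * r + 1) ^ (1 / m)) ^ m := by
          rw [← Real.rpow_mul (by linarith : (0:ℝ) ≤ 8 * r + 1),
            one_div_mul_cancel hm0.ne', Real.rpow_one]
      _ ≤ x ^ m := Real.rpow_le_rpow (Real.rpow_nonneg (by linarith) _) hkC hm0.le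
  have hgamma := gamma_add_lb hk2 hm0 hm1 hmα
  have hxmpos : (0:ℝ) < x ^ m := Real.rpow_pos_of_pos hx0 _
  have hP : ‖(ascPochhammer ℂ (k+1)).eval γ‖ ≤ ‖(ascPochhammer ℂ k).eval γ‖ * (2 * (k + 1)) := by
    rw [ascPochhammer_succ_eval, norm_mul]
    apply mul_le_mul_of_nonneg_left _ (norm_nonneg _)
    calc ‖γ + (k:ℂ)‖ ≤ ‖γ‖ + ‖(k:ℂ)‖ := norm_add_le _ _
      _ = ‖γ‖ + k := by rw [Complex.norm_natCast]
      _ ≤ 2 * (k+1) := by push_cast; linarith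
  -- denominators
  have hfac : (0:ℝ) < k.factorial := by positivity
  have hGa : α * (k+1 : ℕ) + β = x + α := by push_cast; ring
  set P := ‖(ascPochhammer ℂ k).eval γ‖
  have hPn : 0 ≤ P := norm_nonneg _
  have key : Real.Gamma x * ((8*r+1) / 2) ≤ Real.Gamma (x + α) := by
    calc Real.Gamma x * ((8*r+1)/2) ≤ Real.Gamma x * (x ^ m / 2) := by
          apply mul_le_mul_of_nonneg_left _ hΓx.le
          linarith
      _ ≤ Real.Gamma (x + α) := hgamma
  rw [Real.norm_of_nonneg (by positivity), Real.norm_of_nonneg (by positivity), hGa]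
  calc ‖(ascPochhammer ℂ (k+1)).eval γ‖ * r ^ (k+1) / ((k+1).factorial * Real.Gamma (x + α))
      ≤ (P * (2 * (k+1))) * (r * r ^ k) /
          (((k+1) * k.factorial) * (Real.Gamma x * ((8*r+1)/2))) := by
        apply div_le_div₀ (by positivity)
        · rw [pow_succ]
          apply mul_le_mul hP (le_of_eq (by ring)) (by positivity) (by positivity)
        · positivity
        · rw [Nat.factorial_succ]
          push_cast
          exact mul_le_mul_of_nonneg_left key (by positivity)
    _ = (P * r ^ k / (k.factorial * Real.Gamma x)) * (4 * r / (8*r+1)) := by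
        field_simp
        ring
    _ ≤ (P * r ^ k / (k.factorial * Real.Gamma x)) * (1/2) := by
        apply mul_le_mul_of_nonneg_left _ (by positivity)
        rw [div_le_div_iff₀ (by linarith) (by norm_num)]
        linarith
    _ = 1/2 * (P * r ^ k / (k.factorial * Real.Gamma x)) := by ring

noncomputable def pcoef (α β : ℝ) (γ lam : ℂ) (k : ℕ) : ℂ :=
  (ascPochhammer ℂ k).eval γ * lam ^ k / ((k.factorial : ℂ) * Complex.Gamma ((α : ℂ) * k + β))

private lemma gamma_cast (α β : ℝ) (k : ℕ) :
    Complex.Gamma ((α : ℂ) * k + β) = ((Real.Gamma (α * k + β) : ℝ) : ℂ) := by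
  rw [show ((α : ℂ) * k + β) = ((α * k + β : ℝ) : ℂ) by push_cast; ring, Complex.Gamma_ofReal]

private lemma norm_pcoef {α β : ℝ} (hβ : 0 < β) (hα : 0 ≤ α) (γ lam : ℂ) (k : ℕ) :
    ‖pcoef α β γ lam k‖ =
      ‖(ascPochhammer ℂ k).eval γ‖ * ‖lam‖ ^ k / (k.factorial * Real.Gamma (α * k + β)) := by
  have hpos : 0 < Real.Gamma (α * k + β) := Real.Gamma_pos_of_pos (by positivity)
  rw [pcoef, gamma_cast, norm_div, norm_mul, norm_pow, norm_mul, Complex.norm_natCast,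
    Complex.norm_real, Real.norm_of_nonneg hpos.le]

private lemma rpow_split {α β : ℝ} {x : ℝ} (hx : 0 < x) (k : ℕ) :
    x ^ (α * k + β - 1) = x ^ (β - 1) * (x ^ α) ^ (k : ℕ) := by
  rw [← Real.rpow_natCast (x ^ α) k, ← Real.rpow_mul hx.le, ← Real.rpow_add hx]
  ring_nf

private lemma prabhakar_expand (α β : ℝ) (γ lam : ℂ) {x : ℝ} (hx : 0 < x) :
    ((x ^ (β - 1) : ℝ) : ℂ) * prabhakar α β γ (lam * ((x ^ α : ℝ) : ℂ)) =
      ∑' k : ℕ, pcoef α β γ lam k * ((x ^ (α * k + β - 1) : ℝ) : ℂ) := by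
  rw [prabhakar, ← tsum_mul_left]
  apply tsum_congr; intro k
  rw [pcoef, rpow_split hx, mul_pow]
  push_cast
  ring

private lemma summable_norm_expand {α β : ℝ} (hα : 0 < α) (hβ : 0 < β) (γ lam : ℂ) {x : ℝ}
    (hx : 0 < x) :
    Summable (fun k : ℕ => ‖pcoef α β γ lam k * ((x ^ (α * k + β - 1) : ℝ) : ℂ)‖) := by
  have h := (summable_master hα hβ γ (r := ‖lam‖ * x ^ α) (by positivity)).mul_left
    (x ^ (β - 1))
  apply h.congr
  intro k
  rw [norm_mul, norm_pcoef hβ hα.le, Complex.norm_real,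
    Real.norm_of_nonneg (Real.rpow_nonneg hx.le _), rpow_split hx, mul_pow]
  ring

noncomputable def Br (P Q : ℝ) : ℝ := ∫ x in (0:ℝ)..1, x ^ (P - 1) * (1 - x) ^ (Q - 1)

private lemma Br_intervalIntegrable {P Q : ℝ} (hP : 0 < P) (hQ : 0 < Q) :
    IntervalIntegrable (fun x : ℝ => x ^ (P - 1) * (1 - x) ^ (Q - 1)) volume 0 1 := by
  have hc := Complex.betaIntegral_convergent (u := (P : ℂ)) (v := (Q : ℂ)) (by simpa) (by simpa)
  rw [intervalIntegrable_iff_integrableOn_Ioc_of_le zero_le_one] at hc ⊢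
  refine MeasureTheory.IntegrableOn.congr_fun hc.re (fun x hx => ?_) measurableSet_Ioc
  obtain ⟨hx0, hx1⟩ := hx
  have e1 : ((x : ℂ) ^ ((P : ℂ) - 1)) = ((x ^ (P - 1) : ℝ) : ℂ) := by
    rw [show ((P : ℂ) - 1) = ((P - 1 : ℝ) : ℂ) by push_cast; ring, ← Complex.ofReal_cpow hx0.le]
  have e2 : ((1 - (x : ℂ)) ^ ((Q : ℂ) - 1)) = (((1 - x) ^ (Q - 1) : ℝ) : ℂ) := by
    rw [show (1 - (x : ℂ)) = (((1 - x : ℝ)) : ℂ) by push_cast; ring,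
      show ((Q : ℂ) - 1) = ((Q - 1 : ℝ) : ℂ) by push_cast; ring,
      ← Complex.ofReal_cpow (by linarith)]
  simp only [RCLike.re_to_complex, e1, e2, ← Complex.ofReal_mul, Complex.ofReal_re]

private lemma betaIntegral_ofReal {P Q : ℝ} :
    Complex.betaIntegral P Q = ((Br P Q : ℝ) : ℂ) := by
  rw [Complex.betaIntegral, Br, ← intervalIntegral.integral_ofReal]
  apply intervalIntegral.integral_congr
  intro x hx
  rw [Set.uIcc_of_le zero_le_one] at hx
  have e1 : ((x : ℂ) ^ ((P : ℂ) - 1)) = ((x ^ (P - 1) : ℝ) : ℂ) := by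
    rw [show ((P : ℂ) - 1) = ((P - 1 : ℝ) : ℂ) by push_cast; ring, ← Complex.ofReal_cpow hx.1]
  have e2 : ((1 - (x : ℂ)) ^ ((Q : ℂ) - 1)) = (((1 - x) ^ (Q - 1) : ℝ) : ℂ) := by
    rw [show (1 - (x : ℂ)) = (((1 - x : ℝ)) : ℂ) by push_cast; ring,
      show ((Q : ℂ) - 1) = ((Q - 1 : ℝ) : ℂ) by push_cast; ring,
      ← Complex.ofReal_cpow (by linarith [hx.2])]
  simp only [e1, e2, ← Complex.ofReal_mul]

private lemma Br_nonneg (P Q : ℝ) : 0 ≤ Br P Q := by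
  apply intervalIntegral.integral_nonneg zero_le_one
  intro u hu
  exact mul_nonneg (Real.rpow_nonneg hu.1 _) (Real.rpow_nonneg (by linarith [hu.2]) _)

private lemma Br_mono {P Q P₀ Q₀ : ℝ} (hP₀ : 0 < P₀) (hQ₀ : 0 < Q₀) (hP : P₀ ≤ P)
    (hQ : Q₀ ≤ Q) : Br P Q ≤ Br P₀ Q₀ := by
  have h1 := Br_intervalIntegrable (lt_of_lt_of_le hP₀ hP) (lt_of_lt_of_le hQ₀ hQ)
  have h0 := Br_intervalIntegrable hP₀ hQ₀
  rw [Br, Br, intervalIntegral.integral_of_le zero_le_one,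
    intervalIntegral.integral_of_le zero_le_one, integral_Ioc_eq_integral_Ioo,
    integral_Ioc_eq_integral_Ioo]
  apply setIntegral_mono_on (h1.1.mono_set Set.Ioo_subset_Ioc_self)
    (h0.1.mono_set Set.Ioo_subset_Ioc_self) measurableSet_Ioo
  intro x hx
  exact mul_le_mul (Real.rpow_le_rpow_of_exponent_ge hx.1 hx.2.le (by linarith))
    (Real.rpow_le_rpow_of_exponent_ge (by linarith [hx.2]) (by linarith [hx.1]) (by linarith))
    (Real.rpow_nonneg (by linarith [hx.2]) _) (Real.rpow_nonneg (by linarith [hx.1]) _)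

private lemma conv_intervalIntegrable {p q t : ℝ} (hp : 0 < p) (hq : 0 < q) (ht : 0 < t) :
    IntervalIntegrable (fun u : ℝ => (t - u) ^ (p - 1) * u ^ (q - 1)) volume 0 t := by
  have half : ∀ p' q' : ℝ, 0 < p' → 0 < q' →
      IntervalIntegrable (fun u : ℝ => (t - u) ^ (p' - 1) * u ^ (q' - 1)) volume 0 (t / 2) := by
    intro p' q' hp' hq'
    apply IntervalIntegrable.continuousOn_mul (intervalIntegral.intervalIntegrable_rpow' (by linarith))
    apply ContinuousOn.rpow_const (Continuous.continuousOn (by continuity))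
    intro x hx
    rw [Set.uIcc_of_le (by linarith : (0:ℝ) ≤ t / 2)] at hx
    left
    have := hx.2
    intro h; rw [sub_eq_zero] at h; rw [h] at this; linarith
  refine (half p q hp hq).trans (b := t / 2) ?_
  have h2 := ((half q p hq hp).comp_sub_left t).symm
  simpa [sub_sub_cancel, mul_comm, sub_zero, sub_half] using h2

private lemma conv_integral_value {p q t : ℝ} (hp : 0 < p) (hq : 0 < q) (ht : 0 < t) :
    (∫ u in (0:ℝ)..t, (((t - u) ^ (p - 1) * u ^ (q - 1) : ℝ) : ℂ)) =
      ((t ^ (p + q - 1) : ℝ) : ℂ) * ((Br q p : ℝ) : ℂ) := by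
  have key := Complex.betaIntegral_scaled (q : ℂ) (p : ℂ) ht
  have congr1 : (∫ u in (0:ℝ)..t, (((t - u) ^ (p - 1) * u ^ (q - 1) : ℝ) : ℂ)) =
      ∫ u in (0:ℝ)..t, (u : ℂ) ^ ((q : ℂ) - 1) * ((t : ℂ) - u) ^ ((p : ℂ) - 1) := by
    apply intervalIntegral.integral_congr
    intro u hu
    beta_reduce
    rw [Set.uIcc_of_le ht.le] at hu
    have e1 : ((u : ℂ) ^ ((q : ℂ) - 1)) = ((u ^ (q - 1) : ℝ) : ℂ) := by
      rw [show ((q : ℂ) - 1) = ((q - 1 : ℝ) : ℂ) by push_cast; ring,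
        ← Complex.ofReal_cpow hu.1]
    have e2 : (((t : ℂ) - u) ^ ((p : ℂ) - 1)) = (((t - u) ^ (p - 1) : ℝ) : ℂ) := by
      rw [show ((t : ℂ) - (u : ℂ)) = (((t - u : ℝ)) : ℂ) by push_cast; ring,
        show ((p : ℂ) - 1) = ((p - 1 : ℝ) : ℂ) by push_cast; ring,
        ← Complex.ofReal_cpow (by linarith [hu.2])]
    rw [e1, e2, ← Complex.ofReal_mul, Complex.ofReal_inj]; ring
  rw [congr1, key, betaIntegral_ofReal,
    show ((q : ℂ) + (p : ℂ) - 1) = ((q + p - 1 : ℝ) : ℂ) by push_cast; ring,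
    ← Complex.ofReal_cpow ht.le]
  norm_num [add_comm q p]

private lemma conv_integral_value_real {p q t : ℝ} (hp : 0 < p) (hq : 0 < q) (ht : 0 < t) :
    (∫ u in (0:ℝ)..t, (t - u) ^ (p - 1) * u ^ (q - 1)) = t ^ (p + q - 1) * Br q p := by
  have h := conv_integral_value hp hq ht
  rw [intervalIntegral.integral_ofReal] at h
  exact_mod_cast h

set_option maxHeartbeats 2000000 in

set_option maxHeartbeats 2000000 in
theorem prabhakar_convolution (α β₁ β₂ : ℝ) (hα : 0 < α) (hβ₁ : 0 < β₁) (hβ₂ : 0 < β₂)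
    (γ₁ γ₂ lam : ℂ) (t : ℝ) (ht : 0 < t) :
    (∫ u in (0:ℝ)..t,
        (((t - u) ^ (β₁ - 1) : ℝ) : ℂ) * prabhakar α β₁ γ₁ (lam * (((t - u) ^ α : ℝ) : ℂ)) *
          (((u ^ (β₂ - 1) : ℝ) : ℂ) * prabhakar α β₂ γ₂ (lam * ((u ^ α : ℝ) : ℂ)))) =
      ((t ^ (β₁ + β₂ - 1) : ℝ) : ℂ) * prabhakar α (β₁ + β₂) (γ₁ + γ₂) (lam * ((t ^ α : ℝ) : ℂ)) := by
  set c₁ : ℕ → ℂ := pcoef α β₁ γ₁ lam with hc₁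
  set c₂ : ℕ → ℂ := pcoef α β₂ γ₂ lam with hc₂
  set f : ℕ × ℕ → ℝ → ℂ := fun p u => c₁ p.1 * c₂ p.2 *
    (((t - u) ^ (α * p.1 + β₁ - 1) * u ^ (α * p.2 + β₂ - 1) : ℝ) : ℂ) with hf
  have hp1 : ∀ j : ℕ, (0:ℝ) < α * j + β₁ := fun j => by positivity
  have hp2 : ∀ k : ℕ, (0:ℝ) < α * k + β₂ := fun k => by positivity
  -- the common norm bound / integral norm value
  set val : ℕ × ℕ → ℝ := fun p => ‖c₁ p.1‖ * ‖c₂ p.2‖ *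
    (t ^ (α * p.1 + β₁ + (α * p.2 + β₂) - 1) * Br (α * p.2 + β₂) (α * p.1 + β₁)) with hval
  have hsummable_val : Summable val := by
    have hA : Summable (fun j : ℕ => ‖c₁ j‖ * (t ^ α) ^ j) := by
      apply (summable_master hα hβ₁ γ₁ (r := ‖lam‖ * t ^ α) (by positivity)).congr
      intro j
      rw [hc₁, norm_pcoef hβ₁ hα.le, mul_pow]
      ring
    have hB : Summable (fun k : ℕ => ‖c₂ k‖ * (t ^ α) ^ k) := by
      apply (summable_master hα hβ₂ γ₂ (r := ‖lam‖ * t ^ α) (by positivity)).congr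
      intro k
      rw [hc₂, norm_pcoef hβ₂ hα.le, mul_pow]
      ring
    have hAB := (hA.mul_of_nonneg hB (fun j => by positivity) (fun k => by positivity)).mul_right
      (t ^ (β₁ + β₂ - 1) * Br β₂ β₁)
    apply Summable.of_nonneg_of_le _ _ hAB
    · intro p
      have := Br_nonneg (α * p.2 + β₂) (α * p.1 + β₁)
      positivity
    · intro p
      have hsplit : t ^ (α * p.1 + β₁ + (α * p.2 + β₂) - 1) =
          t ^ (β₁ + β₂ - 1) * (t ^ α) ^ (p.1:ℕ) * (t ^ α) ^ (p.2:ℕ) := by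
        rw [← Real.rpow_natCast (t ^ α) p.1, ← Real.rpow_natCast (t ^ α) p.2,
          ← Real.rpow_mul ht.le, ← Real.rpow_mul ht.le, ← Real.rpow_add ht,
          ← Real.rpow_add ht]
        ring_nf
      have hBr : Br (α * p.2 + β₂) (α * p.1 + β₁) ≤ Br β₂ β₁ :=
        Br_mono hβ₂ hβ₁ (by linarith [mul_nonneg hα.le ((Nat.cast_nonneg p.2 : (0:ℝ) ≤ p.2))])
          (by linarith [mul_nonneg hα.le ((Nat.cast_nonneg p.1 : (0:ℝ) ≤ p.1))])
      have hBr0 := Br_nonneg (α * p.2 + β₂) (α * p.1 + β₁)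
      simp only [hval, hsplit]
      calc ‖c₁ p.1‖ * ‖c₂ p.2‖ *
            (t ^ (β₁ + β₂ - 1) * (t ^ α) ^ (p.1:ℕ) * (t ^ α) ^ (p.2:ℕ) *
              Br (α * p.2 + β₂) (α * p.1 + β₁))
          ≤ ‖c₁ p.1‖ * ‖c₂ p.2‖ *
            (t ^ (β₁ + β₂ - 1) * (t ^ α) ^ (p.1:ℕ) * (t ^ α) ^ (p.2:ℕ) * Br β₂ β₁) := by
            have h0 : (0:ℝ) ≤ ‖c₁ p.1‖ * ‖c₂ p.2‖ *
                (t ^ (β₁ + β₂ - 1) * (t ^ α) ^ (p.1:ℕ) * (t ^ α) ^ (p.2:ℕ)) := by positivity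
            calc _ = (‖c₁ p.1‖ * ‖c₂ p.2‖ *
                  (t ^ (β₁ + β₂ - 1) * (t ^ α) ^ (p.1:ℕ) * (t ^ α) ^ (p.2:ℕ))) *
                    Br (α * p.2 + β₂) (α * p.1 + β₁) := by ring
              _ ≤ (‖c₁ p.1‖ * ‖c₂ p.2‖ *
                  (t ^ (β₁ + β₂ - 1) * (t ^ α) ^ (p.1:ℕ) * (t ^ α) ^ (p.2:ℕ))) * Br β₂ β₁ :=
                mul_le_mul_of_nonneg_left hBr h0
              _ = _ := by ring
        _ = ‖c₁ p.1‖ * (t ^ α) ^ (p.1:ℕ) * (‖c₂ p.2‖ * (t ^ α) ^ (p.2:ℕ)) *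
              (t ^ (β₁ + β₂ - 1) * Br β₂ β₁) := by ring
  -- continue main proof
  set T : ℕ × ℕ → ℂ := fun p => c₁ p.1 * c₂ p.2 *
    (((t ^ (α * p.1 + β₁ + (α * p.2 + β₂) - 1) : ℝ) : ℂ) *
      ((Br (α * p.2 + β₂) (α * p.1 + β₁) : ℝ) : ℂ)) with hT
  have hint : ∀ p : ℕ × ℕ, Integrable (f p) (volume.restrict (Set.Ioo (0:ℝ) t)) := by
    intro p
    have h := conv_intervalIntegrable (hp1 p.1) (hp2 p.2) ht
    rw [intervalIntegrable_iff_integrableOn_Ioc_of_le ht.le] at h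
    have h2 : IntegrableOn (f p) (Set.Ioc 0 t) volume :=
      (Integrable.ofReal (𝕜 := ℂ) h).const_mul (c₁ p.1 * c₂ p.2)
    exact h2.mono_set Set.Ioo_subset_Ioc_self
  have hnormval : ∀ p : ℕ × ℕ, (∫ u in Set.Ioo (0:ℝ) t, ‖f p u‖) = val p := by
    intro p
    have heq : Set.EqOn (fun u => ‖f p u‖)
        (fun u => ‖c₁ p.1‖ * ‖c₂ p.2‖ *
          ((t - u) ^ (α * p.1 + β₁ - 1) * u ^ (α * p.2 + β₂ - 1))) (Set.Ioo 0 t) := by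
      intro u hu
      have h1 : (0:ℝ) ≤ (t - u) ^ (α * p.1 + β₁ - 1) * u ^ (α * p.2 + β₂ - 1) :=
        mul_nonneg (Real.rpow_nonneg (by linarith [hu.2]) _)
          (Real.rpow_nonneg hu.1.le _)
      simp only [hf, norm_mul, Complex.norm_real, Real.norm_of_nonneg h1]
    rw [setIntegral_congr_fun measurableSet_Ioo heq]
    rw [MeasureTheory.integral_const_mul, ← integral_Ioc_eq_integral_Ioo,
      ← intervalIntegral.integral_of_le ht.le,
      conv_integral_value_real (hp1 p.1) (hp2 p.2) ht, hval]
  have hptval : ∀ p : ℕ × ℕ, (∫ u in Set.Ioo (0:ℝ) t, f p u) = T p := by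
    intro p
    simp only [hf, hT]
    rw [MeasureTheory.integral_const_mul, ← integral_Ioc_eq_integral_Ioo,
      ← intervalIntegral.integral_of_le ht.le,
      conv_integral_value (hp1 p.1) (hp2 p.2) ht]
  have hswap := integral_tsum_of_summable_integral_norm hint
    (hsummable_val.congr (fun p => (hnormval p).symm))
  have hpointwise : Set.EqOn
      (fun u => (((t - u) ^ (β₁ - 1) : ℝ) : ℂ) *
          prabhakar α β₁ γ₁ (lam * (((t - u) ^ α : ℝ) : ℂ)) *
        (((u ^ (β₂ - 1) : ℝ) : ℂ) * prabhakar α β₂ γ₂ (lam * ((u ^ α : ℝ) : ℂ))))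
      (fun u => ∑' p : ℕ × ℕ, f p u) (Set.Ioo 0 t) := by
    intro u hu
    obtain ⟨hu0, hut⟩ := hu
    have htu : (0:ℝ) < t - u := by linarith
    beta_reduce
    rw [prabhakar_expand α β₁ γ₁ lam htu, prabhakar_expand α β₂ γ₂ lam hu0,
      tsum_mul_tsum_of_summable_norm (summable_norm_expand hα hβ₁ γ₁ lam htu)
        (summable_norm_expand hα hβ₂ γ₂ lam hu0)]
    apply tsum_congr
    intro p
    simp only [hf]
    push_cast
    ring
  rw [intervalIntegral.integral_of_le ht.le, integral_Ioc_eq_integral_Ioo,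
    setIntegral_congr_fun measurableSet_Ioo hpointwise, ← hswap, tsum_congr hptval,
    show ((β₁ : ℂ) + (β₂ : ℂ)) = ((β₁ + β₂ : ℝ) : ℂ) from by push_cast; ring,
    prabhakar_expand α (β₁ + β₂) (γ₁ + γ₂) lam ht]
  -- it remains to evaluate the double sum
  have hTsummable : Summable T := by
    apply Summable.of_norm
    apply hsummable_val.congr
    intro p
    simp only [hT, hval, norm_mul, Complex.norm_real,
      Real.norm_of_nonneg (Real.rpow_nonneg ht.le _),
      Real.norm_of_nonneg (Br_nonneg _ _), mul_assoc]
  rw [← Finset.HasAntidiagonal.sigmaAntidiagonalEquivProd.tsum_eq T]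
  refine Eq.trans (Summable.tsum_sigma' (fun n => (hasSum_fintype _).summable)
    (Finset.HasAntidiagonal.sigmaAntidiagonalEquivProd.summable_iff.mpr hTsummable)) ?_
  apply tsum_congr
  intro n
  rw [tsum_fintype]
  rw [show ∑ c : {x // x ∈ Finset.HasAntidiagonal.antidiagonal n},
      T (Finset.HasAntidiagonal.sigmaAntidiagonalEquivProd ⟨n, c⟩) = ∑ p ∈ Finset.HasAntidiagonal.antidiagonal n, T p from
    Finset.sum_finset_coe _ _]
  -- per-n evaluation
  have hΓn0 : Complex.Gamma ((α * n + (β₁ + β₂) : ℝ) : ℂ) ≠ 0 := by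
    rw [Complex.Gamma_ofReal]
    exact_mod_cast (Real.Gamma_pos_of_pos (by positivity)).ne'
  have key : ∀ p ∈ Finset.HasAntidiagonal.antidiagonal n, T p =
      (n.choose p.1 : ℂ) *
        ((ascPochhammer ℂ p.1).eval γ₁ * (ascPochhammer ℂ p.2).eval γ₂) *
        (lam ^ n * ((t ^ (α * n + (β₁ + β₂) - 1) : ℝ) : ℂ) /
          ((n.factorial : ℂ) * ((Real.Gamma (α * n + (β₁ + β₂)) : ℝ) : ℂ))) := by
    intro p hp
    have hpn : p.1 + p.2 = n := Finset.HasAntidiagonal.mem_antidiagonal.mp hp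
    have hjn : p.1 ≤ n := by omega
    have hE : α * p.1 + β₁ + (α * p.2 + β₂) - 1 = α * n + (β₁ + β₂) - 1 := by
      rw [← hpn]; push_cast; ring
    have hsum : ((α * p.2 + β₂ : ℝ) : ℂ) + ((α * p.1 + β₁ : ℝ) : ℂ) =
        ((α * n + (β₁ + β₂) : ℝ) : ℂ) := by rw [← hpn]; push_cast; ring
    have hbeta : ((Br (α * p.2 + β₂) (α * p.1 + β₁) : ℝ) : ℂ) =
        Complex.Gamma ((α * p.2 + β₂ : ℝ) : ℂ) * Complex.Gamma ((α * p.1 + β₁ : ℝ) : ℂ) /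
          Complex.Gamma ((α * n + (β₁ + β₂) : ℝ) : ℂ) := by
      rw [← betaIntegral_ofReal, eq_div_iff hΓn0, ← hsum,
        Complex.Gamma_mul_Gamma_eq_betaIntegral
          (by rw [Complex.ofReal_re]; exact hp2 p.2)
          (by rw [Complex.ofReal_re]; exact hp1 p.1)]
      ring
    have hfact : ((n.factorial : ℕ) : ℂ) =
        (n.choose p.1 : ℂ) * (p.1.factorial : ℂ) * (p.2.factorial : ℂ) := by
      have := Nat.choose_mul_factorial_mul_factorial hjn
      rw [show n - p.1 = p.2 by omega] at this
      exact_mod_cast this.symm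
    have hL : lam ^ p.1 * lam ^ p.2 = lam ^ n := by rw [← pow_add, hpn]
    have hΓ1 : ((Real.Gamma (α * p.1 + β₁) : ℝ) : ℂ) ≠ 0 := by
      exact_mod_cast (Real.Gamma_pos_of_pos (hp1 p.1)).ne'
    have hΓ2 : ((Real.Gamma (α * p.2 + β₂) : ℝ) : ℂ) ≠ 0 := by
      exact_mod_cast (Real.Gamma_pos_of_pos (hp2 p.2)).ne'
    have hf1 : ((p.1.factorial : ℕ) : ℂ) ≠ 0 := Nat.cast_ne_zero.mpr p.1.factorial_ne_zero
    have hf2 : ((p.2.factorial : ℕ) : ℂ) ≠ 0 := Nat.cast_ne_zero.mpr p.2.factorial_ne_zero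
    have hch : (n.choose p.1 : ℂ) ≠ 0 :=
      Nat.cast_ne_zero.mpr (Nat.choose_pos hjn).ne'
    have hΓn0' : ((Real.Gamma (α * n + (β₁ + β₂)) : ℝ) : ℂ) ≠ 0 := by
      exact_mod_cast (Real.Gamma_pos_of_pos (by positivity)).ne'
    simp only [hT, hc₁, hc₂, pcoef, gamma_cast, hE, hbeta, Complex.Gamma_ofReal]
    rw [hfact, ← hL]
    field_simp [hΓ1, hΓ2, hf1, hf2, hΓn0', hch]
  rw [Finset.sum_congr rfl key, ← Finset.sum_mul, ← pochhammer_vandermonde, pcoef,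
    gamma_cast]
  ring
end
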